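/- The stabilizer in SL(3,ℤ) of the positive definite matrix [[6,−2,2],[−2,6,2],[2,2,6]] (which is three times the matrix A(2/3,2/3,−2/3)), namely {g ∈ SL(3,ℤ) : gᵀ·[[6,−2,2],[−2,6,2],[2,2,6]]·g = [[6,−2,2],[−2,6,2],[2,2,6]]}, is isomorphic to the symmetric group S₄ on four letters (in particular it has order 24). -/
import Mathlib


open Matrix

/-- `SL(3, ℤ)`, the group of 3 × 3 integer matrices of determinant one. -/
abbrev SL3 := Matrix.SpecialLinearGroup (Fin 3) ℤ

/-- The stabilizer in `SL(3, ℤ)` of an integer matrix `B` under the congruence action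
`A · g = gᵀ A g`. -/
def congrStab (B : Matrix (Fin 3) (Fin 3) ℤ) : Subgroup SL3 where
  carrier := {g | (g : Matrix (Fin 3) (Fin 3) ℤ)ᵀ * B * (g : Matrix (Fin 3) (Fin 3) ℤ) = B}
  one_mem' := by simp
  mul_mem' := by
    intro a b ha hb
    simp only [Set.mem_setOf_eq] at *
    calc ((a * b : SL3) : Matrix (Fin 3) (Fin 3) ℤ)ᵀ * B * ((a * b : SL3) : Matrix (Fin 3) (Fin 3) ℤ)
        = (b : Matrix (Fin 3) (Fin 3) ℤ)ᵀ * ((a : Matrix (Fin 3) (Fin 3) ℤ)ᵀ * B * a) * b := by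
          simp [Matrix.transpose_mul, Matrix.mul_assoc]
      _ = B := by rw [ha, hb]
  inv_mem' := by
    intro g hg
    simp only [Set.mem_setOf_eq] at *
    have hc : (g : Matrix (Fin 3) (Fin 3) ℤ) * ((g⁻¹ : SL3) : Matrix (Fin 3) (Fin 3) ℤ) = 1 := by
      rw [← Matrix.SpecialLinearGroup.coe_mul, mul_inv_cancel, Matrix.SpecialLinearGroup.coe_one]
    calc ((g⁻¹ : SL3) : Matrix (Fin 3) (Fin 3) ℤ)ᵀ * B * ((g⁻¹ : SL3) : Matrix (Fin 3) (Fin 3) ℤ)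
        = ((g⁻¹ : SL3) : Matrix (Fin 3) (Fin 3) ℤ)ᵀ *
            ((g : Matrix (Fin 3) (Fin 3) ℤ)ᵀ * B * g) *
            ((g⁻¹ : SL3) : Matrix (Fin 3) (Fin 3) ℤ) := by rw [hg]
      _ = ((g : Matrix (Fin 3) (Fin 3) ℤ) * ((g⁻¹ : SL3) : Matrix (Fin 3) (Fin 3) ℤ))ᵀ * B *
            ((g : Matrix (Fin 3) (Fin 3) ℤ) * ((g⁻¹ : SL3) : Matrix (Fin 3) (Fin 3) ℤ)) := by
          simp [Matrix.transpose_mul, Matrix.mul_assoc]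
      _ = B := by rw [hc]; simp

/-- The matrix `3·A(2/3,2/3,-2/3)` representing the vertex `P` of Soulé's fundamental domain. -/
def BP : Matrix (Fin 3) (Fin 3) ℤ := !![6, -2, 2; -2, 6, 2; 2, 2, 6]


/-- The four lattice vectors `q₀ = e₁, q₁ = e₂, q₂ = -e₃, q₃ = (-1,-1,1)`; they sum to zero,
each has norm 6 and all pairwise inner products (w.r.t. `BP`) equal `-2`. -/
def qcol : Fin 4 → Fin 3 → ℤ := ![![1,0,0], ![0,1,0], ![0,0,-1], ![-1,-1,1]]

/-- The (det `±1`) matrix sending `qⱼ ↦ q_{σ j}`. -/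
def M0 (σ : Equiv.Perm (Fin 4)) : Matrix (Fin 3) (Fin 3) ℤ :=
  Matrix.of fun i j => (![1,1,-1] : Fin 3 → ℤ) j * qcol (σ j.castSucc) i

/-- Sign-normalized version of `M0`, with determinant `1`. -/
def Mm (σ : Equiv.Perm (Fin 4)) : Matrix (Fin 3) (Fin 3) ℤ := (M0 σ).det • M0 σ

set_option maxRecDepth 10000 in
lemma Mm_det : ∀ σ, (Mm σ).det = 1 := by decide

set_option maxRecDepth 100000 in
set_option maxHeartbeats 2000000 in
lemma Mm_mul : ∀ σ τ : Equiv.Perm (Fin 4), Mm (σ * τ) = Mm σ * Mm τ := by decide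

set_option maxRecDepth 10000 in
lemma Mm_stab : ∀ σ, (Mm σ)ᵀ * BP * Mm σ = BP := by decide

set_option maxRecDepth 10000 in
lemma Mm_inj : ∀ σ, Mm σ = 1 → σ = 1 := by decide

/-- The eight integer vectors of norm 6 for the form `BP`. -/
def Lv : Fin 8 → Fin 3 → ℤ :=
  ![![1,0,0], ![-1,0,0], ![0,1,0], ![0,-1,0], ![0,0,1], ![0,0,-1], ![1,1,-1], ![-1,-1,1]]

set_option maxRecDepth 100000 in
set_option maxHeartbeats 2000000 in
lemma key : ∀ u : Fin 3 → Fin 8,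
    (Matrix.of fun i j => Lv (u j) i)ᵀ * BP * (Matrix.of fun i j => Lv (u j) i) = BP →
    (Matrix.of fun i j => Lv (u j) i).det = 1 →
    ∃ σ, Mm σ = Matrix.of fun i j => Lv (u j) i := by decide

lemma col_mem (x y z : ℤ)
    (h : 6*x^2+6*y^2+6*z^2-4*x*y+4*x*z+4*y*z = 6) :
    ∃ k : Fin 8, x = Lv k 0 ∧ y = Lv k 1 ∧ z = Lv k 2 := by
  have hb : ∀ t : ℤ, t^2 ≤ 3 → -1 ≤ t ∧ t ≤ 1 := by
    intro t ht
    constructor <;> nlinarith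
  have sq1 := sq_nonneg (x-y)
  have sq2 := sq_nonneg (x+z)
  have sq3 := sq_nonneg (y+z)
  have sq4 := sq_nonneg x
  have sq5 := sq_nonneg y
  have sq6 := sq_nonneg z
  obtain ⟨hx1, hx2⟩ := hb x (by nlinarith)
  obtain ⟨hy1, hy2⟩ := hb y (by nlinarith)
  obtain ⟨hz1, hz2⟩ := hb z (by nlinarith)
  interval_cases x <;> interval_cases y <;> interval_cases z <;> revert h <;> decide

/-- `Mm σ` as an element of `SL(3, ℤ)`. -/
def fm (σ : Equiv.Perm (Fin 4)) : SL3 := ⟨Mm σ, Mm_det σ⟩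

/-- The monoid hom `S₄ →* SL(3, ℤ)`. -/
def fhom : Equiv.Perm (Fin 4) →* SL3 where
  toFun := fm
  map_one' := Subtype.ext (by decide)
  map_mul' σ τ := Subtype.ext (Mm_mul σ τ)

lemma stab_to_fm (g : SL3) (hg : (g : Matrix (Fin 3) (Fin 3) ℤ)ᵀ * BP * g = BP) :
    ∃ σ, fm σ = g := by
  set A := (g : Matrix (Fin 3) (Fin 3) ℤ) with hA
  have hQ : ∀ j : Fin 3,
      6*(A 0 j)^2+6*(A 1 j)^2+6*(A 2 j)^2-4*(A 0 j)*(A 1 j)+4*(A 0 j)*(A 2 j)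
        +4*(A 1 j)*(A 2 j) = 6 := by
    intro j
    fin_cases j
    · have h1 := congrFun (congrFun hg 0) 0
      simp [Matrix.mul_apply, Fin.sum_univ_succ, BP, Matrix.transpose_apply] at h1
      show 6*(A 0 0)^2+6*(A 1 0)^2+6*(A 2 0)^2-4*(A 0 0)*(A 1 0)+4*(A 0 0)*(A 2 0)
        +4*(A 1 0)*(A 2 0) = 6
      linear_combination h1
    · have h1 := congrFun (congrFun hg 1) 1
      simp [Matrix.mul_apply, Fin.sum_univ_succ, BP, Matrix.transpose_apply] at h1
      show 6*(A 0 1)^2+6*(A 1 1)^2+6*(A 2 1)^2-4*(A 0 1)*(A 1 1)+4*(A 0 1)*(A 2 1)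
        +4*(A 1 1)*(A 2 1) = 6
      linear_combination h1
    · have h1 := congrFun (congrFun hg 2) 2
      simp [Matrix.mul_apply, Fin.sum_univ_succ, BP, Matrix.transpose_apply] at h1
      show 6*(A 0 2)^2+6*(A 1 2)^2+6*(A 2 2)^2-4*(A 0 2)*(A 1 2)+4*(A 0 2)*(A 2 2)
        +4*(A 1 2)*(A 2 2) = 6
      linear_combination h1
  have hcol := fun j => col_mem (A 0 j) (A 1 j) (A 2 j) (hQ j)
  choose u hu using hcol
  have hAeq : A = Matrix.of fun i j => Lv (u j) i := by
    funext i j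
    fin_cases i
    · exact (hu j).1
    · exact (hu j).2.1
    · exact (hu j).2.2
  obtain ⟨σ, hσ⟩ := key u (by rw [← hAeq]; exact hg) (by rw [← hAeq]; exact g.2)
  exact ⟨σ, Subtype.ext (hσ.trans hAeq.symm)⟩

/-- The stabilizer `{g ∈ SL(3, ℤ) : gᵀ [[6,-2,2],[-2,6,2],[2,2,6]] g = [[6,-2,2],[-2,6,2],[2,2,6]]}`
is isomorphic to the symmetric group `S₄`; in particular it has order 24. -/
theorem stabilizer_of_vertex_P :
    Nonempty (congrStab BP ≃* Equiv.Perm (Fin 4)) ∧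
    Nat.card (congrStab BP) = 24 := by

  have hinj : Function.Injective fhom := by
    rw [injective_iff_map_eq_one]
    intro σ hσ
    exact Mm_inj σ (congrArg Subtype.val hσ)
  have hrange : fhom.range = congrStab BP := by
    apply le_antisymm
    · rintro _ ⟨σ, rfl⟩
      exact Mm_stab σ
    · intro g hg
      obtain ⟨σ, hσ⟩ := stab_to_fm g hg
      exact ⟨σ, hσ⟩
  have e : congrStab BP ≃* Equiv.Perm (Fin 4) :=
    ((MonoidHom.ofInjective hinj).trans (MulEquiv.subgroupCongr hrange)).symm
  refine ⟨⟨e⟩, ?_⟩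
  rw [Nat.card_congr e.toEquiv, Nat.card_eq_fintype_card, Fintype.card_perm]
  rfl
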